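/- For all integers t0 ≥ t1 ≥ 3, the rational number (-2 - t1 + 2·t0·t1)/(1 + t1 - t0·t1) has continued fraction expansion [-3, -2,...,-2, -3, -2,...,-2] with t0 - 3 entries -2 after the first -3 and t1 - 2 entries -2 after the second -3, and the associated product |(-3+1)·(-2+1)^{t0-3}·(-3+1)·(-2+1)^{t1-3}·(-2)| equals 8. -/

import Mathlib

/-- The continued fraction `[r₀,...,r_k] = r₀ - 1/(r₁ - 1/(⋯ - 1/r_k))`. -/
def cf : List ℚ → ℚ
  | [] => 0
  | [r] => r
  | r :: s :: rest => r - 1 / cf (s :: rest)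

/-- `N = |(r₀+1)(r₁+1)⋯(r_{k-1}+1) · r_k|` for the expansion `[r₀,...,r_k]`. -/
def cfN (l : List ℚ) : ℚ := |((l.dropLast).map (· + 1)).prod * l.getLastD 0|

lemma cf_cons (a : ℚ) (l : List ℚ) (h : l ≠ []) : cf (a :: l) = a - 1 / cf l := by
  cases l with
  | nil => exact absurd rfl h
  | cons b t => rfl

lemma cf_repl (m : ℕ) : cf (List.replicate (m + 1) (-2 : ℚ)) = -((m : ℚ) + 2) / ((m : ℚ) + 1) := by
  induction m with
  | zero => norm_num [cf]
  | succ n ih =>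
      have h2 : -((n : ℚ) + 2) ≠ 0 := by
        have : (0:ℚ) < (n : ℚ) + 2 := by positivity
        intro h; nlinarith
      have h3 : ((n + 1 : ℕ) : ℚ) + 1 ≠ 0 := by positivity
      rw [List.replicate_succ, cf_cons _ _ (by simp), ih, one_div_div,
        sub_div', div_eq_div_iff h2 h3]
      push_cast
      ring
      exact h2

lemma cf_B (k m : ℕ) :
    cf (List.replicate k (-2 : ℚ) ++ (-3 : ℚ) :: List.replicate m (-2)) =
      (-((k : ℚ) * m + 2 * k + 2 * m + 3)) / ((k : ℚ) * m + 2 * k + m + 1) := by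
  induction k with
  | zero =>
      simp only [List.replicate_zero, List.nil_append]
      cases m with
      | zero => norm_num [cf]
      | succ n =>
          have h2 : -((n : ℚ) + 2) ≠ 0 := by
            have : (0:ℚ) < (n : ℚ) + 2 := by positivity
            intro h; nlinarith
          have h3 : ((0 : ℕ) : ℚ) * ((n + 1 : ℕ) : ℚ) + 2 * ((0:ℕ) : ℚ) + ((n + 1 : ℕ) : ℚ) + 1 ≠ 0 := by
            positivity
          rw [cf_cons _ _ (by simp), cf_repl, one_div_div,
            sub_div', div_eq_div_iff h2 h3]
          push_cast
          ring
          exact h2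
  | succ n ih =>
      have hnum : -((n : ℚ) * m + 2 * n + 2 * m + 3) ≠ 0 := by
        have : (0:ℚ) < (n : ℚ) * m + 2 * n + 2 * m + 3 := by positivity
        intro h; nlinarith
      have h3 : ((n + 1 : ℕ) : ℚ) * (m : ℚ) + 2 * ((n + 1 : ℕ) : ℚ) + (m : ℚ) + 1 ≠ 0 := by
        positivity
      rw [List.replicate_succ, List.cons_append, cf_cons _ _ (by simp), ih, one_div_div,
        sub_div', div_eq_div_iff hnum h3]
      push_cast
      ring
      exact hnum

theorem cf_case_c4 (t0 t1 : ℤ) (h1 : 3 ≤ t1) (h0 : t1 ≤ t0) :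
    cf ((-3 : ℚ) :: (List.replicate (t0 - 3).toNat (-2) ++
          (-3 : ℚ) :: List.replicate (t1 - 2).toNat (-2)))
        = ((-2 : ℚ) - t1 + 2 * t0 * t1) / (1 + t1 - t0 * t1) ∧
      cfN ((-3 : ℚ) :: (List.replicate (t0 - 3).toNat (-2) ++
          (-3 : ℚ) :: List.replicate (t1 - 2).toNat (-2))) = 8 := by
  have hKi : (((t0 - 3).toNat : ℤ)) = t0 - 3 := Int.toNat_of_nonneg (by omega)
  have hMi : (((t1 - 2).toNat : ℤ)) = t1 - 2 := Int.toNat_of_nonneg (by omega)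
  have hKc : (((t0 - 3).toNat : ℕ) : ℚ) = (t0 : ℚ) - 3 := by
    exact_mod_cast congrArg (fun z : ℤ => (z : ℚ)) hKi
  have hMc : (((t1 - 2).toNat : ℕ) : ℚ) = (t1 : ℚ) - 2 := by
    exact_mod_cast congrArg (fun z : ℤ => (z : ℚ)) hMi
  have hnumZ : (1 + t1 - t0 * t1 : ℤ) < 0 := by nlinarith
  constructor
  · have hnum' : -(((t0 : ℚ) - 3) * ((t1 : ℚ) - 2) + 2 * ((t0 : ℚ) - 3) + 2 * ((t1 : ℚ) - 2) + 3) ≠ 0 := by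
      have h : ((1 + t1 - t0 * t1 : ℤ) : ℚ) ≠ 0 := by exact_mod_cast hnumZ.ne
      push_cast at h
      intro hc; apply h; linarith
    have htgt : (1 : ℚ) + t1 - t0 * t1 ≠ 0 := by
      have h : ((1 + t1 - t0 * t1 : ℤ) : ℚ) ≠ 0 := by exact_mod_cast hnumZ.ne
      push_cast at h
      exact h
    rw [cf_cons _ _ (by simp), cf_B, hKc, hMc, one_div_div,
      sub_div', div_eq_div_iff hnum' htgt]
    ring
    exact hnum'
  · obtain ⟨M', hM'⟩ : ∃ n, (t1 - 2).toNat = n + 1 := ⟨(t1 - 2).toNat - 1, by omega⟩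
    rw [hM', List.replicate_succ']
    have hlist : ((-3 : ℚ) :: (List.replicate (t0 - 3).toNat (-2) ++
        (-3 : ℚ) :: (List.replicate M' (-2) ++ [(-2 : ℚ)]))) =
        ((-3 : ℚ) :: (List.replicate (t0 - 3).toNat (-2) ++
        (-3 : ℚ) :: List.replicate M' (-2))) ++ [(-2 : ℚ)] := by
      simp
    rw [hlist]
    unfold cfN
    rw [List.dropLast_concat, List.getLastD_concat]
    simp only [List.map_cons, List.map_append, List.map_replicate, List.prod_cons,
      List.prod_append, List.prod_replicate]
    norm_num [abs_mul, abs_pow]
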